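/- Let a ≥ 2 be a natural number, d = a² + 4a, θ = (a + 2 + √d)/2, and let (q_n) be the convergent denominators of [0; 1,a,1,a,...] (q_0 = q_1 = 1, q_N = a·q_{N-1}+q_{N-2} for even N ≥ 2, q_N = q_{N-1}+q_{N-2} for odd N ≥ 2). Then for every ℓ ≥ 0, q_{2ℓ+1} = (θ/√d)·θ^ℓ − (θ^{−1}/√d)·θ^{−ℓ}. -/

import Mathlib

theorem stmt_3 (a : ℕ) (ha : 2 ≤ a) (q : ℕ → ℕ)
    (h0 : q 0 = 1) (h1 : q 1 = 1)
    (heven : ∀ N, 2 ≤ N → Even N → q N = a * q (N - 1) + q (N - 2))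
    (hodd : ∀ N, 2 ≤ N → Odd N → q N = q (N - 1) + q (N - 2))
    (d θ : ℝ) (hd : d = (a : ℝ) ^ 2 + 4 * a)
    (hθ : θ = ((a : ℝ) + 2 + Real.sqrt d) / 2) :
    ∀ ℓ : ℕ, (q (2 * ℓ + 1) : ℝ) =
      (θ / Real.sqrt d) * θ ^ ℓ - (θ⁻¹ / Real.sqrt d) * θ ^ (-(ℓ : ℤ)) := by
  have ha' : (2:ℝ) ≤ (a:ℝ) := by exact_mod_cast ha
  set s := Real.sqrt d with hs
  have hd0 : (0:ℝ) < d := by rw [hd]; nlinarith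
  have hs0 : 0 < s := Real.sqrt_pos.mpr hd0
  have hs2 : s^2 = (a:ℝ)^2 + 4*a := by rw [hs, Real.sq_sqrt hd0.le, hd]
  have hθ0 : 0 < θ := by rw [hθ]; linarith
  set t : ℝ := ((a:ℝ) + 2 - s) / 2 with htdef
  have hinv : θ⁻¹ = t := by
    have hmul : θ * t = 1 := by
      rw [hθ, htdef]; linear_combination (-1/4 : ℝ) * hs2
    exact inv_eq_of_mul_eq_one_right hmul
  have hθ2 : θ^2 = ((a:ℝ)+2)*θ - 1 := by
    rw [hθ]; linear_combination (1/4 : ℝ) * hs2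
  have ht2 : t^2 = ((a:ℝ)+2)*t - 1 := by
    rw [htdef]; linear_combination (1/4 : ℝ) * hs2
  have key : ∀ ℓ : ℕ,
      ((q (2 * ℓ + 1) : ℝ) = (θ * θ ^ ℓ - t * t ^ ℓ) / s) ∧
      ((q (2 * (ℓ+1) + 1) : ℝ) = (θ * θ ^ (ℓ+1) - t * t ^ (ℓ+1)) / s) := by
    intro ℓ
    induction ℓ with
    | zero =>
      constructor
      · simp only [Nat.mul_zero, Nat.zero_add, h1, pow_zero, mul_one]
        rw [hθ, htdef]
        field_simp
        push_cast
        ring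
      · have h2 : q 2 = a * q 1 + q 0 := heven 2 (by norm_num) (by decide)
        have h3 : q 3 = q 2 + q 1 := hodd 3 (by norm_num) (by decide)
        have hq3 : q 3 = a + 2 := by rw [h3, h2, h1, h0]; ring
        show (q 3 : ℝ) = _
        rw [hq3]
        push_cast
        rw [hθ, htdef]
        field_simp
        ring
    | succ n ih =>
      obtain ⟨ih0, ih1⟩ := ih
      refine ⟨ih1, ?_⟩
      have A := heven (2*n+4) (by omega) ⟨n+2, by ring⟩
      have B := hodd (2*n+5) (by omega) ⟨n+2, by ring⟩
      have C := hodd (2*n+3) (by omega) ⟨n+1, by ring⟩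
      have e1 : 2*n+4-1 = 2*n+3 := by omega
      have e2 : 2*n+4-2 = 2*n+2 := by omega
      have e3 : 2*n+5-1 = 2*n+4 := by omega
      have e4 : 2*n+5-2 = 2*n+3 := by omega
      have e5 : 2*n+3-1 = 2*n+2 := by omega
      have e6 : 2*n+3-2 = 2*n+1 := by omega
      rw [e1, e2] at A; rw [e3, e4] at B; rw [e5, e6] at C
      have hrec : (q (2*n+5) : ℝ) = ((a:ℝ)+2) * q (2*n+3) - q (2*n+1) := by
        have A' : (q (2*n+4) : ℝ) = a * q (2*n+3) + q (2*n+2) := by exact_mod_cast A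
        have B' : (q (2*n+5) : ℝ) = q (2*n+4) + q (2*n+3) := by exact_mod_cast B
        have C' : (q (2*n+3) : ℝ) = q (2*n+2) + q (2*n+1) := by exact_mod_cast C
        linear_combination B' + A' - C'
      rw [show 2 * (n + 1) + 1 = 2*n+3 from by ring] at ih1
      rw [show 2 * (n + 1 + 1) + 1 = 2*n+5 from by ring, hrec, ih0, ih1]
      linear_combination (-(θ^(n+1)/s)) * hθ2 + (t^(n+1)/s) * ht2
  intro ℓ
  have h := (key ℓ).1
  rw [h, zpow_neg, zpow_natCast, hinv, ← inv_pow, hinv]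
  ring
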